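/- Let R > 0 and let R0 be as in the escape-radius proposition (so that |f^n_ω(z)| ≥ 2^n|z| for |z| > R0 and all ω ∈ D(0,R)^ℕ). Then for all z with |z| > R0 and all ω ∈ D(0,R)^ℕ, the Green function satisfies |g_ω(z) − ln|z|| < 1. -/

import Mathlib

open Metric Complex Filter

/-- The quadratic polynomial `f_c(z) = z^2 + c`. -/
noncomputable def fc (c z : ℂ) : ℂ := z ^ 2 + c

/-- The non-autonomous orbit: `orbitC ω z n = f_{ω(n-1)} ∘ ... ∘ f_{ω 0} (z)`. -/
noncomputable def orbitC (ω : ℕ → ℂ) (z : ℂ) : ℕ → ℂ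
  | 0 => z
  | n + 1 => fc (ω n) (orbitC ω z n)

lemma log_diff_bound {x y : ℝ} (hy : 0 < y) (h : |x - y| ≤ y / 2) :
    |Real.log x - Real.log y| ≤ 2 * |x - y| / y := by
  have hxy := abs_le.1 h
  have hx : 0 < x := by linarith [hxy.1]
  rw [abs_le]
  constructor
  · have h1 : Real.log y - Real.log x ≤ y / x - 1 := by
      have := Real.log_le_sub_one_of_pos (show 0 < y / x from div_pos hy hx)
      rwa [Real.log_div hy.ne' hx.ne'] at this
    have h2 : y / x - 1 = (y - x) / x := by field_simp
    have h4 : (y - x) / x ≤ 2 * |x - y| / y := by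
      rw [div_le_div_iff₀ hx hy]
      have h5 : y - x ≤ |x - y| := by rw [abs_sub_comm]; exact le_abs_self _
      nlinarith [abs_nonneg (x - y)]
    linarith
  · have h1 : Real.log x - Real.log y ≤ x / y - 1 := by
      have := Real.log_le_sub_one_of_pos (show 0 < x / y from div_pos hx hy)
      rwa [Real.log_div hx.ne' hy.ne'] at this
    have h2 : x / y - 1 = (x - y) / y := by field_simp
    have h4 : (x - y) / y ≤ 2 * |x - y| / y := by
      rw [div_le_div_iff₀ hy hy]
      nlinarith [le_abs_self (x - y), abs_nonneg (x - y)]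
    linarith

theorem stmt3 (R : ℝ) (hR : 0 < R) :
    ∃ R0 : ℝ, 0 < R0 ∧
      (∀ ω : ℕ → ℂ, (∀ n, ‖ω n‖ < R) →
        ∀ z : ℂ, ‖z‖ > R0 →
          ∀ n : ℕ, ‖orbitC ω z n‖ ≥ 2 ^ n * ‖z‖) ∧
      (∀ ω : ℕ → ℂ, (∀ n, ‖ω n‖ < R) →
        ∀ z : ℂ, ‖z‖ > R0 →
          ∃ g : ℝ, Tendsto (fun n : ℕ => Real.log (‖orbitC ω z n‖) / 2 ^ n)
            atTop (nhds g) ∧ |g - Real.log (‖z‖)| < 1) := by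
  refine ⟨R + 2, by linarith, ?_, ?_⟩
  case _ =>
    intro ω hω z hz n
    induction n with
    | zero => simp [orbitC]
    | succ n ih =>
      have h2n : (1:ℝ) ≤ 2 ^ n := one_le_pow₀ (by norm_num)
      have hb : ‖orbitC ω z n‖ > R + 2 := by
        have : (2:ℝ) ^ n * ‖z‖ ≥ 1 * ‖z‖ := by
          apply mul_le_mul_of_nonneg_right h2n (norm_nonneg z)
        calc ‖orbitC ω z n‖ ≥ 2 ^ n * ‖z‖ := ih
          _ ≥ 1 * ‖z‖ := this
          _ > R + 2 := by linarith
      have hstep : ‖orbitC ω z (n+1)‖ ≥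
          ‖orbitC ω z n‖ ^ 2 - R := by
        have h1 : ‖orbitC ω z n ^ 2 + ω n‖ ≥
            ‖orbitC ω z n ^ 2‖ - ‖ω n‖ := by
          have h0 := abs_norm_sub_norm_le (orbitC ω z n ^ 2 + ω n) (orbitC ω z n ^ 2)
          simp only [add_sub_cancel_left] at h0
          have := (abs_le.1 h0).1
          linarith [this]
        simp only [orbitC, fc]
        rw [norm_pow] at h1
        linarith [hω n]
      have : ‖orbitC ω z n‖ ^ 2 - R ≥ 2 * ‖orbitC ω z n‖ := by
        nlinarith
      calc ‖orbitC ω z (n+1)‖ ≥ 2 * ‖orbitC ω z n‖ := by linarith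
        _ ≥ 2 * (2 ^ n * ‖z‖) := by linarith [ih]
        _ = 2 ^ (n+1) * ‖z‖ := by ring
  case _ =>
    intro ω hω z hz
    -- escape estimate (re-derive)
    have hesc : ∀ n : ℕ, ‖orbitC ω z n‖ ≥ 2 ^ n * ‖z‖ := by
      intro n
      induction n with
      | zero => simp [orbitC]
      | succ n ih =>
        have h2n : (1:ℝ) ≤ 2 ^ n := one_le_pow₀ (by norm_num)
        have hb : ‖orbitC ω z n‖ > R + 2 := by
          have : (2:ℝ) ^ n * ‖z‖ ≥ 1 * ‖z‖ :=
            mul_le_mul_of_nonneg_right h2n (norm_nonneg z)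
          calc ‖orbitC ω z n‖ ≥ 2 ^ n * ‖z‖ := ih
            _ ≥ 1 * ‖z‖ := this
            _ > R + 2 := by linarith
        have hstep : ‖orbitC ω z (n+1)‖ ≥
            ‖orbitC ω z n‖ ^ 2 - R := by
          have h1 : ‖orbitC ω z n ^ 2 + ω n‖ ≥
              ‖orbitC ω z n ^ 2‖ - ‖ω n‖ := by
            have h0 := abs_norm_sub_norm_le (orbitC ω z n ^ 2 + ω n) (orbitC ω z n ^ 2)
            simp only [add_sub_cancel_left] at h0
            have := (abs_le.1 h0).1
            linarith [this]
          simp only [orbitC, fc]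
          rw [norm_pow] at h1
          linarith [hω n]
        have : ‖orbitC ω z n‖ ^ 2 - R ≥ 2 * ‖orbitC ω z n‖ := by
          nlinarith
        calc ‖orbitC ω z (n+1)‖ ≥ 2 * ‖orbitC ω z n‖ := by linarith
          _ ≥ 2 * (2 ^ n * ‖z‖) := by linarith [ih]
          _ = 2 ^ (n+1) * ‖z‖ := by ring
    set u : ℕ → ℝ := fun n => Real.log (‖orbitC ω z n‖) / 2 ^ n with hu
    set d : ℕ → ℝ := fun n => u (n+1) - u n with hdd
    set C : ℝ := R / (R + 2) ^ 2 with hC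
    have hb_big : ∀ n : ℕ, ‖orbitC ω z n‖ ≥ 2 ^ n * (R + 2) := by
      intro n
      calc ‖orbitC ω z n‖ ≥ 2 ^ n * ‖z‖ := hesc n
        _ ≥ 2 ^ n * (R + 2) := by
          apply mul_le_mul_of_nonneg_left (le_of_lt hz) (by positivity)
    have hd : ∀ n : ℕ, |d n| ≤ C * (1/8) ^ n := by
      intro n
      set b : ℝ := ‖orbitC ω z n‖ with hbdef
      set a : ℝ := ‖orbitC ω z (n+1)‖ with hadef
      have h2n : (1:ℝ) ≤ 2 ^ n := one_le_pow₀ (by norm_num)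
      have hbR : b ≥ 2 ^ n * (R + 2) := hb_big n
      have hbpos : 0 < b := by nlinarith
      have hbR2 : b ≥ R + 2 := by nlinarith
      have hab : |a - b ^ 2| ≤ R := by
        have h1 : |‖orbitC ω z n ^ 2 + ω n‖ -
            ‖orbitC ω z n ^ 2‖| ≤ ‖ω n‖ := by
          have := abs_norm_sub_norm_le (orbitC ω z n ^ 2 + ω n)
            (orbitC ω z n ^ 2)
          simpa using this
        have h2 : a = ‖orbitC ω z n ^ 2 + ω n‖ := by
          simp [hadef, orbitC, fc]
        have h3 : ‖orbitC ω z n ^ 2‖ = b ^ 2 := by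
          rw [norm_pow]
        rw [h2, ← h3]
        exact h1.trans (le_of_lt (hω n))
      have hRb : R ≤ b ^ 2 / 2 := by nlinarith
      have hlog : |Real.log a - Real.log (b ^ 2)| ≤ 2 * R / b ^ 2 := by
        have h1 := log_diff_bound (show (0:ℝ) < b ^ 2 by positivity)
          (le_trans hab hRb)
        calc |Real.log a - Real.log (b ^ 2)| ≤ 2 * |a - b ^ 2| / b ^ 2 := h1
          _ ≤ 2 * R / b ^ 2 := by
            apply div_le_div_of_nonneg_right ?_ (by positivity)
            linarith
      have hdn : d n = (Real.log a - Real.log (b ^ 2)) / 2 ^ (n+1) := by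
        simp only [hdd, hu]
        rw [Real.log_pow]
        push_cast
        field_simp
        ring
      have hdabs : |d n| ≤ (2 * R / b ^ 2) / 2 ^ (n+1) := by
        rw [hdn, abs_div, abs_of_pos (show (0:ℝ) < (2:ℝ) ^ (n+1) by positivity)]
        apply div_le_div_of_nonneg_right hlog (by positivity)
        |>.trans (le_refl _)
      have hbsq : b ^ 2 ≥ (2 ^ n * (R + 2)) ^ 2 := by
        have h0 : (0:ℝ) ≤ 2 ^ n * (R + 2) := by positivity
        nlinarith [hbR, h0]
      have hfinal : (2 * R / b ^ 2) / 2 ^ (n+1) ≤ C * (1/8) ^ n := by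
        have key : C * (1/8 : ℝ) ^ n = (2 * R / (2 ^ n * (R + 2)) ^ 2) / 2 ^ (n+1) := by
          have h8 : (8:ℝ) ^ n = 2 ^ n * 2 ^ n * 2 ^ n := by
            rw [show (8:ℝ) = 2 * 2 * 2 by norm_num, mul_pow, mul_pow]
          rw [hC]
          rw [div_pow, one_pow, h8]
          have h2pos : (0:ℝ) < 2 ^ n := by positivity
          field_simp
          ring
        rw [key]
        apply div_le_div_of_nonneg_right ?_ (by positivity)
        apply div_le_div_of_nonneg_left (by linarith) (by positivity)
        exact hbsq
      exact le_trans hdabs hfinal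
    have hgeo : Summable fun n : ℕ => C * (1/8 : ℝ) ^ n :=
      (summable_geometric_of_lt_one (by norm_num) (by norm_num)).mul_left C
    have habs : Summable fun n : ℕ => |d n| :=
      Summable.of_nonneg_of_le (fun n => abs_nonneg _) hd hgeo
    have hdsum : Summable d := habs.of_abs
    set S : ℝ := ∑' n, d n with hS
    refine ⟨u 0 + S, ?_, ?_⟩
    · have htend : Tendsto (fun n => ∑ i ∈ Finset.range n, d i) atTop (nhds S) :=
        hdsum.hasSum.tendsto_sum_nat
      have heq : ∀ n, u 0 + ∑ i ∈ Finset.range n, d i = u n := by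
        intro n
        rw [Finset.sum_range_sub (f := u)]
        ring
      have : Tendsto (fun n => u 0 + ∑ i ∈ Finset.range n, d i) atTop (nhds (u 0 + S)) :=
        htend.const_add (u 0)
      simpa [heq] using this
    · have hu0 : u 0 = Real.log (‖z‖) := by simp [hu, orbitC]
      have h1 : |S| ≤ ∑' n, |d n| := by
        have := norm_tsum_le_tsum_norm (f := d) (by simpa [Real.norm_eq_abs] using habs)
        simpa [Real.norm_eq_abs] using this
      have h2 : ∑' n, |d n| ≤ ∑' n : ℕ, C * (1/8 : ℝ) ^ n :=
        Summable.tsum_le_tsum hd habs hgeo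
      have h3 : ∑' n : ℕ, C * (1/8 : ℝ) ^ n = C * (8/7 : ℝ) := by
        rw [tsum_mul_left, tsum_geometric_of_lt_one (by norm_num) (by norm_num)]
        norm_num
      have h4 : C * (8/7 : ℝ) < 1 := by
        rw [hC]
        rw [div_mul_eq_mul_div, div_lt_one (by positivity)]
        nlinarith
      rw [hu0]
      have : |u 0 + S - Real.log (‖z‖)| = |S| := by rw [hu0]; ring_nf
      rw [hu0] at this
      rw [this]
      linarith
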